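/- Let T = ⋃_{α a countable successor ordinal} ω₁^α be the tree of transfinite sequences in ω₁ of countable successor length, ordered by extension, and let P(T) ⊆ 2^T be its path space. Then P(T) is a closed (hence compact) subspace of 2^T, and P(T) ∩ Σ(T) is dense in P(T), where Σ(T) = {x ∈ ℝ^T : supp x countable}; hence P(T) is a Valdivia compact space. -/

import Mathlib

open Cardinal

/-- The first uncountable ordinal. -/
noncomputable def omega1 : Ordinal.{0} := (Cardinal.aleph 1).ord

/-- The tree `T = ⋃ {ω₁^α : α a countable successor ordinal}` of transfinite sequences in
`ω₁` of countable successor length, encoded as pairs (length, function), with the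
function normalized to `0` outside the domain. -/
def TreeT : Type 1 :=
  {p : Ordinal.{0} × (Ordinal.{0} → Ordinal.{0}) //
    (∃ β : Ordinal.{0}, p.1 = β + 1) ∧ p.1 < omega1 ∧
    (∀ i, i < p.1 → p.2 i < omega1) ∧ (∀ i, ¬ i < p.1 → p.2 i = 0)}

/-- The tree order on `T`: extension of sequences. -/
def treeLE (s t : TreeT) : Prop := s.1.1 ≤ t.1.1 ∧ ∀ i, i < s.1.1 → s.1.2 i = t.1.2 i

/-- Strict tree order. -/
def treeLT (s t : TreeT) : Prop := treeLE s t ∧ s ≠ t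

/-- The path space `P(T) ⊆ 2^T`: characteristic functions of downward closed chains. -/
def PathSpace : Set (TreeT → Bool) :=
  {ε | (∀ s t, ε s = true → ε t = true → treeLE s t ∨ treeLE t s) ∧
    (∀ t s, ε t = true → treeLT s t → ε s = true)}

/-- `P(T)` is closed (hence compact) in the Cantor cube `2^T`, and the
points of `P(T)` of countable support (i.e. `P(T) ∩ Σ(T)`) are dense in `P(T)`; hence
`P(T)` is a Valdivia compact space. -/
lemma closed_aux (s t : TreeT) (P : Bool → Bool → Prop) :
    IsClosed {ε : TreeT → Bool | P (ε s) (ε t)} := by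
  have h : {ε : TreeT → Bool | P (ε s) (ε t)} =
      (fun ε : TreeT → Bool => (ε s, ε t)) ⁻¹' {p : Bool × Bool | P p.1 p.2} := rfl
  rw [h]
  exact (isClosed_discrete _).preimage ((continuous_apply s).prodMk (continuous_apply t))

lemma treeT_eq_of_le_le {s t : TreeT} (h1 : treeLE s t) (h2 : treeLE t s) : s = t := by
  obtain ⟨hle, hfun⟩ := h1
  obtain ⟨hle', _⟩ := h2
  have hlen : s.1.1 = t.1.1 := le_antisymm hle hle'
  apply Subtype.ext
  apply Prod.ext hlen
  funext i
  by_cases hi : i < s.1.1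
  · exact hfun i hi
  · rw [s.2.2.2.2 i hi, t.2.2.2.2 i (hlen ▸ hi)]

theorem statement18 :
    IsClosed PathSpace ∧
    Dense {ε : ↥PathSpace | {t : TreeT | (ε : TreeT → Bool) t ≠ false}.Countable} := by
  constructor
  · have heq : PathSpace =
        (⋂ (s : TreeT) (t : TreeT),
          {ε : TreeT → Bool | ε s = true → ε t = true → treeLE s t ∨ treeLE t s}) ∩
        (⋂ (t : TreeT) (s : TreeT) (_ : treeLT s t),
          {ε : TreeT → Bool | ε t = true → ε s = true}) := by
      ext ε
      simp only [PathSpace, Set.mem_setOf_eq, Set.mem_inter_iff, Set.mem_iInter]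
      constructor
      · rintro ⟨h1, h2⟩
        exact ⟨h1, fun t s h ht => h2 t s ht h⟩
      · rintro ⟨h1, h2⟩
        exact ⟨h1, fun t s ht h => h2 t s h ht⟩
    rw [heq]
    refine IsClosed.inter (isClosed_iInter fun s => isClosed_iInter fun t => ?_)
      (isClosed_iInter fun t => isClosed_iInter fun s => isClosed_iInter fun _ => ?_)
    · exact closed_aux s t (fun a b => a = true → b = true → treeLE s t ∨ treeLE t s)
    · exact closed_aux t s (fun a b => a = true → b = true)
  · rw [dense_iff_inter_open]
    rintro U hU ⟨ε, hεU⟩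
    obtain ⟨V, hV, rfl⟩ := isOpen_induced_iff.mp hU
    have hεV : (ε : TreeT → Bool) ∈ V := hεU
    obtain ⟨I, u, hu, hsub⟩ := isOpen_pi_iff.mp hV ε hεV
    -- bound
    set δ : Ordinal.{0} := (I.sup fun t => t.1.1) + 1 with hδ
    have hδlt : δ < omega1 := by
      have hlim : Order.IsSuccLimit omega1 := Cardinal.isSuccLimit_ord (by simp [Cardinal.aleph0_le_aleph])
      rw [hδ, Ordinal.add_one_eq_succ]; apply hlim.succ_lt
      rcases I.eq_empty_or_nonempty with h | h
      · simpa [h] using hlim.pos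
      · rw [Finset.sup_lt_iff (by simpa using hlim.pos)]
        exact fun t _ => t.2.2.1
    have hsupδ : (I.sup fun t => t.1.1) < δ := by
      rw [hδ, Ordinal.add_one_eq_succ]; exact Order.lt_succ _
    have hmemδ : ∀ t ∈ I, t.1.1 < δ := fun t ht =>
      lt_of_le_of_lt (Finset.le_sup (f := fun t : TreeT => t.1.1) ht) hsupδ
    classical
    -- truncation
    set ε' : TreeT → Bool := fun t => if t.1.1 < δ then (ε : TreeT → Bool) t else false with hε'
    have hε'true : ∀ t, ε' t = true → (ε : TreeT → Bool) t = true ∧ t.1.1 < δ := by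
      intro t ht
      by_cases h : t.1.1 < δ
      · refine ⟨?_, h⟩; simpa [hε', h] using ht
      · simp [hε', h] at ht
    have hpath : ε' ∈ PathSpace := by
      obtain ⟨hchain, hdown⟩ := ε.2
      constructor
      · intro s t hs ht
        exact hchain s t (hε'true s hs).1 (hε'true t ht).1
      · intro t s ht hst
        obtain ⟨hεt, htδ⟩ := hε'true t ht
        have hεs := hdown t s hεt hst
        have hsδ : s.1.1 < δ := lt_of_le_of_lt hst.1.1 htδ
        simp [hε', hsδ, hεs]
    refine ⟨⟨ε', hpath⟩, ?_, ?_⟩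
    · show ε' ∈ V
      apply hsub
      intro t ht
      have h1 : ε' t = (ε : TreeT → Bool) t := by simp [hε', hmemδ t ht]
      rw [h1]
      exact (hu t ht).2
    · -- countable support
      show {t : TreeT | ε' t ≠ false}.Countable
      have hsubset : {t : TreeT | ε' t ≠ false} ⊆
          {t : TreeT | (ε : TreeT → Bool) t = true ∧ t.1.1 < δ} := by
        intro t ht
        exact hε'true t (by simpa using ht)
      apply Set.Countable.mono hsubset
      rw [Cardinal.countable_iff_lt_aleph_one]
      have hinj : Function.Injective
          (fun t : {t : TreeT | (ε : TreeT → Bool) t = true ∧ t.1.1 < δ} =>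
            (⟨t.1.1.1, t.2.2⟩ : Set.Iio δ)) := by
        rintro ⟨s, hs⟩ ⟨t, ht⟩ h
        have hlen : s.1.1 = t.1.1 := by simpa using congrArg Subtype.val h
        have hc := ε.2.1 s t hs.1 ht.1
        rcases hc with h' | h'
        · exact Subtype.ext (treeT_eq_of_le_le h' ⟨hlen.ge, fun i hi => (h'.2 i (hlen ▸ hi)).symm⟩)
        · exact Subtype.ext (treeT_eq_of_le_le ⟨hlen.le, fun i hi => (h'.2 i (hlen ▸ hi)).symm⟩ h')
      calc #{t : TreeT | (ε : TreeT → Bool) t = true ∧ t.1.1 < δ}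
          ≤ #(Set.Iio δ) := Cardinal.mk_le_of_injective hinj
        _ = Cardinal.lift.{1} δ.card := Ordinal.mk_Iio_ordinal δ
        _ < ℵ₁ := by
            rw [Cardinal.lift_lt_aleph_one]
            exact Cardinal.lt_ord.mp hδlt
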